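/- For any odd integer n ≥ 17 such that n − 1 is a perfect square, the ordinary caterpillar C_{n−2}((n+1)/2, (n−3)/2 + √(n−1)) is transmission irregular. -/
import Mathlib


open SimpleGraph

variable {V : Type*}

/-- The transmission of a vertex `v`: the sum of distances from `v` to all vertices. -/
noncomputable def transmission (G : SimpleGraph V) [Fintype V] (v : V) : ℕ :=
  ∑ u : V, G.dist v u

/-- The Wiener index: the sum of distances over all unordered pairs of vertices. -/
noncomputable def wienerIndex (G : SimpleGraph V) [Fintype V] : ℕ :=
  (∑ u : V, ∑ w : V, G.dist u w) / 2

/-- A graph on at least two vertices is transmission irregular if all of its vertices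
have pairwise distinct transmissions. -/
def TransIrregular (G : SimpleGraph V) [Fintype V] : Prop :=
  2 ≤ Fintype.card V ∧ Function.Injective (transmission G)

/-- The degree of a vertex. -/
noncomputable def vertexDegree (G : SimpleGraph V) (v : V) : ℕ :=
  Nat.card (G.neighborSet v)

/-- A natural number is a perfect square. -/
def IsPerfectSquare (m : ℕ) : Prop := ∃ t : ℕ, m = t * t

/-- The starlike tree `S(a, b, c)`: three pendent paths of lengths `a`, `b`, `c`
emanating from a common central vertex (vertex `0`).  The first branch consists of the
vertices `1, …, a`, the second of `a+1, …, a+b` and the third of `a+b+1, …, a+b+c`. -/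
def starlike (a b c : ℕ) : SimpleGraph (Fin (a + b + c + 1)) :=
  SimpleGraph.fromRel (fun x y =>
    (y.val = x.val + 1 ∧ x.val ≠ a ∧ x.val ≠ a + b) ∨
    (x.val = 0 ∧ (y.val = a + 1 ∨ y.val = a + b + 1)))

/-- The ordinary caterpillar `C_m(a, b)`: the path `v_1 v_2 ⋯ v_m` (vertices `0, …, m-1`)
together with one new leaf attached to `v_a` (the vertex `m`, attached to `a-1`) and one new
leaf attached to `v_b` (the vertex `m+1`, attached to `b-1`). -/
def caterpillar2 (m a b : ℕ) : SimpleGraph (Fin (m + 2)) :=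
  SimpleGraph.fromRel (fun x y =>
    (y.val = x.val + 1 ∧ y.val < m) ∨
    (x.val = a - 1 ∧ y.val = m) ∨
    (x.val = b - 1 ∧ y.val = m + 1))

/-- The variant caterpillar `C_m(a, 2; b, 1)`: the path `v_1 v_2 ⋯ v_m`
(vertices `0, …, m-1`) together with a pendent path of length two attached to `v_a`
(vertices `m` and `m+1`) and a pendent path of length one attached to `v_b`
(the vertex `m+2`). -/
def varCaterpillar (m a b : ℕ) : SimpleGraph (Fin (m + 3)) :=
  SimpleGraph.fromRel (fun x y =>
    (y.val = x.val + 1 ∧ y.val < m) ∨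
    (x.val = a - 1 ∧ y.val = m) ∨
    (x.val = m ∧ y.val = m + 1) ∨
    (x.val = b - 1 ∧ y.val = m + 2))

/-- `T` is a transmission irregular tree of order `n` attaining the maximum Wiener
index among all transmission irregular trees of order `n`. -/
def MaxTITree (n : ℕ) (T : SimpleGraph (Fin n)) : Prop :=
  T.IsTree ∧ TransIrregular T ∧
    ∀ T' : SimpleGraph (Fin n), T'.IsTree → TransIrregular T' →
      wienerIndex T' ≤ wienerIndex T

/-- The graph `X` is, up to isomorphism, the unique transmission irregular tree of
order `n` attaining the maximum Wiener index. -/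
def UniqueMaxTITree (n : ℕ) {m : ℕ} (X : SimpleGraph (Fin m)) : Prop :=
  (∃ T : SimpleGraph (Fin n), MaxTITree n T ∧ Nonempty (T ≃g X)) ∧
    ∀ T : SimpleGraph (Fin n), MaxTITree n T → Nonempty (T ≃g X)

namespace CatTIAux
open SimpleGraph Finset

lemma abs_sub_le_walk {V : Type*} {G : SimpleGraph V} (f : V → ℤ)
    (hf : ∀ x y, G.Adj x y → |f x - f y| ≤ 1) :
    ∀ {u v : V} (w : G.Walk u v), |f u - f v| ≤ w.length := by
  intro u v w
  induction w with
  | nil => simp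
  | @cons a b c h w ih =>
    have h1 := hf a b h
    have h2 := abs_sub_le (f a) (f b) (f c)
    simp only [Walk.length_cons]
    push_cast
    linarith

lemma abs_sub_le_dist {V : Type*} {G : SimpleGraph V} (f : V → ℤ)
    (hf : ∀ x y, G.Adj x y → |f x - f y| ≤ 1) {u v : V} (hr : G.Reachable u v) :
    |f u - f v| ≤ G.dist u v := by
  obtain ⟨w, hw⟩ := hr.exists_walk_length_eq_dist
  rw [← hw]
  exact abs_sub_le_walk f hf w

lemma dist_le_of_reach_adj {V : Type*} {G : SimpleGraph V} {x y z : V}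
    (hr : G.Reachable x y) (h : G.Adj y z) : G.dist x z ≤ G.dist x y + 1 := by
  obtain ⟨w, hw⟩ := hr.exists_walk_length_eq_dist
  calc G.dist x z ≤ (w.append (Walk.cons h Walk.nil)).length := dist_le _
  _ = G.dist x y + 1 := by simp [hw]

lemma gaussZ (n : ℕ) : 2 * ∑ k ∈ range n, (k : ℤ) = n * (n - 1) := by
  induction n with
  | zero => simp
  | succ n ih => rw [sum_range_succ]; push_cast; push_cast at ih; ring_nf; ring_nf at ih; linarith

lemma sum_abs_Z (i : ℕ) : ∀ (m : ℕ), i < m →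
    2 * ∑ k ∈ range m, |(i : ℤ) - k| = i * (i + 1) + ((m : ℤ) - 1 - i) * ((m : ℤ) - i) := by
  intro m
  induction m with
  | zero => omega
  | succ m ih =>
    intro him
    rw [sum_range_succ]
    rcases Nat.lt_or_ge i m with h | h
    · have := ih h
      have habs : |(i : ℤ) - m| = (m : ℤ) - i := by
        rw [abs_of_nonpos (by push_cast; omega)]; ring
      rw [habs]
      push_cast
      push_cast at this
      nlinarith [this]
    · have hi : i = m := by omega
      subst hi
      have hrw : ∀ k ∈ range i, |(i:ℤ) - k| = (i:ℤ) - k := by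
        intro k hk
        rw [abs_of_nonneg]
        simp only [mem_range] at hk
        push_cast; omega
      rw [sum_congr rfl hrw]
      simp only [sub_self, abs_zero, add_zero]
      have h1 : ∑ k ∈ range i, ((i:ℤ) - k) = i * i - ∑ k ∈ range i, (k:ℤ) := by
        rw [sum_sub_distrib]; simp [mul_comm]
      have h2 := gaussZ i
      push_cast
      nlinarith [h1, h2]


section Cat
variable (m p q : ℕ)

/-- path coordinate -/
def pc (x : ℕ) : ℕ := if x < m then x else if x = m then p else q

/-- explicit distance function on codes -/
def D (x y : ℕ) : ℕ :=
  if x = y then 0 else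
    (pc m p q x - pc m p q y) + (pc m p q y - pc m p q x)
      + (if m ≤ x then 1 else 0) + (if m ≤ y then 1 else 0)

variable {m p q}

lemma D_symm (x y : ℕ) : D m p q x y = D m p q y x := by
  unfold D
  rcases eq_or_ne x y with h | h
  · simp [h]
  · rw [if_neg h, if_neg (Ne.symm h)]; ring

variable (hpq : p < q) (hqm : q + 1 < m)

local notation "G" => caterpillar2 m (p+1) (q+1)

include hpq hqm

lemma adj_path {i j : ℕ} (hi : i < m + 2) (hj : j < m + 2) (hij : j = i + 1) (hjm : j < m) :
    (G).Adj ⟨i, hi⟩ ⟨j, hj⟩ := by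
  rw [caterpillar2, fromRel_adj]
  exact ⟨by simp [Fin.ext_iff]; omega, Or.inl (Or.inl ⟨hij, hjm⟩)⟩

lemma adj_L1 (hp' : p < m + 2) (hm' : m < m + 2) : (G).Adj ⟨p, hp'⟩ ⟨m, hm'⟩ := by
  rw [caterpillar2, fromRel_adj]
  refine ⟨by simp [Fin.ext_iff]; omega, Or.inl (Or.inr (Or.inl ⟨by simp, rfl⟩))⟩

lemma adj_L2 (hq' : q < m + 2) (hm' : m + 1 < m + 2) : (G).Adj ⟨q, hq'⟩ ⟨m + 1, hm'⟩ := by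
  rw [caterpillar2, fromRel_adj]
  refine ⟨by simp [Fin.ext_iff]; omega, Or.inl (Or.inr (Or.inr ⟨by simp, rfl⟩))⟩

end Cat

section More
variable {m p q : ℕ} (hpq : p < q) (hqm : q + 1 < m)
local notation "G" => caterpillar2 m (p+1) (q+1)

include hpq hqm

lemma path_reach_le : ∀ (d i j : ℕ) (hij : j = i + d) (hjm : j < m)
    (hi : i < m + 2) (hj : j < m + 2),
    (G).Reachable ⟨i, hi⟩ ⟨j, hj⟩ ∧ (G).dist ⟨i, hi⟩ ⟨j, hj⟩ ≤ d := by
  intro d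
  induction d with
  | zero =>
    intro i j hij hjm hi hj
    have : (⟨j, hj⟩ : Fin (m+2)) = ⟨i, hi⟩ := by simp [Fin.ext_iff]; omega
    rw [this]
    exact ⟨Reachable.refl _, by simp⟩
  | succ d ih =>
    intro i j hij hjm hi hj
    have hj' : i + d < m := by omega
    obtain ⟨hr, hd⟩ := ih i (i + d) rfl (by omega) hi (by omega)
    have hadj : (G).Adj ⟨i + d, by omega⟩ ⟨j, hj⟩ :=
      adj_path hpq hqm _ _ (by omega) (by omega)
    exact ⟨hr.trans hadj.reachable,
      le_trans (dist_le_of_reach_adj hr hadj) (by omega)⟩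

/-- reach + dist bound between two path vertices -/
lemma path_dd (i j : ℕ) (him : i < m) (hjm : j < m) (hi : i < m + 2) (hj : j < m + 2) :
    (G).Reachable ⟨i, hi⟩ ⟨j, hj⟩ ∧ (G).dist ⟨i, hi⟩ ⟨j, hj⟩ ≤ (i - j) + (j - i) := by
  rcases le_total i j with h | h
  · obtain ⟨hr, hd⟩ := path_reach_le hpq hqm (j - i) i j (by omega) hjm hi hj
    exact ⟨hr, by omega⟩
  · obtain ⟨hr, hd⟩ := path_reach_le hpq hqm (i - j) j i (by omega) him hj hi
    exact ⟨hr.symm, by rw [dist_comm]; omega⟩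

/-- reach + dist bound from path vertex i to leaf L1 -/
lemma distL1 (i : ℕ) (him : i < m) (hi : i < m + 2) (hm' : m < m + 2) :
    (G).Reachable ⟨i, hi⟩ ⟨m, hm'⟩ ∧ (G).dist ⟨i, hi⟩ ⟨m, hm'⟩ ≤ (i - p) + (p - i) + 1 := by
  obtain ⟨hr, hd⟩ := path_dd hpq hqm i p him (by omega) hi (by omega)
  have hadj : (G).Adj ⟨p, by omega⟩ ⟨m, hm'⟩ := adj_L1 hpq hqm _ _
  exact ⟨hr.trans hadj.reachable, le_trans (dist_le_of_reach_adj hr hadj) (by omega)⟩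

lemma distL2 (i : ℕ) (him : i < m) (hi : i < m + 2) (hm' : m + 1 < m + 2) :
    (G).Reachable ⟨i, hi⟩ ⟨m + 1, hm'⟩ ∧
      (G).dist ⟨i, hi⟩ ⟨m + 1, hm'⟩ ≤ (i - q) + (q - i) + 1 := by
  obtain ⟨hr, hd⟩ := path_dd hpq hqm i q him (by omega) hi (by omega)
  have hadj : (G).Adj ⟨q, by omega⟩ ⟨m + 1, hm'⟩ := adj_L2 hpq hqm _ _
  exact ⟨hr.trans hadj.reachable, le_trans (dist_le_of_reach_adj hr hadj) (by omega)⟩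

lemma distL1L2 (hm' : m < m + 2) (hm'' : m + 1 < m + 2) :
    (G).Reachable ⟨m, hm'⟩ ⟨m + 1, hm''⟩ ∧
      (G).dist ⟨m, hm'⟩ ⟨m + 1, hm''⟩ ≤ (q - p) + 2 := by
  have hq2 : q < m + 2 := by omega
  obtain ⟨hr, hd⟩ := distL1 hpq hqm q (by omega) hq2 hm'
  have hadj : (G).Adj ⟨q, hq2⟩ ⟨m + 1, hm''⟩ := adj_L2 hpq hqm _ _
  refine ⟨(hr.symm).trans hadj.reachable, ?_⟩
  calc (G).dist ⟨m, hm'⟩ ⟨m + 1, hm''⟩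
      ≤ (G).dist ⟨m, hm'⟩ ⟨q, hq2⟩ + 1 := dist_le_of_reach_adj hr.symm hadj
    _ = (G).dist ⟨q, hq2⟩ ⟨m, hm'⟩ + 1 := by rw [dist_comm]
    _ ≤ (q - p) + 2 := by omega

/-- global reachability -/
lemma reach_all (u v : Fin (m + 2)) : (G).Reachable u v := by
  have key : ∀ w : Fin (m + 2), (G).Reachable ⟨0, by omega⟩ w := by
    intro w
    obtain ⟨wv, hwlt⟩ := w
    rcases Nat.lt_or_ge wv m with h | h
    · exact (path_dd hpq hqm 0 wv (by omega) h (by omega) hwlt).1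
    · rcases Nat.eq_or_lt_of_le h with h' | h'
      · subst h'
        exact (distL1 hpq hqm 0 (by omega) (by omega) hwlt).1
      · have hw : wv = m + 1 := by omega
        subst hw
        exact (distL2 hpq hqm 0 (by omega) (by omega) hwlt).1
  exact (key u).symm.trans (key v)

end More

section Pot
variable (m p q : ℕ)

/-- potential function -/
def pot (A B : ℤ) (v : Fin (m + 2)) : ℤ :=
  if v.val < m then v.val else if v.val = m then A else B

variable {m p q}
variable (hpq : p < q) (hqm : q + 1 < m)
local notation "G" => caterpillar2 m (p+1) (q+1)

include hpq hqm

lemma pot_lipschitz (A B : ℤ) (hA : |A - p| ≤ 1) (hB : |B - q| ≤ 1) :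
    ∀ x y : Fin (m + 2), (G).Adj x y → |pot m A B x - pot m A B y| ≤ 1 := by
  have key : ∀ x y : Fin (m + 2),
      ((y.val = x.val + 1 ∧ y.val < m) ∨ (x.val = (p+1) - 1 ∧ y.val = m) ∨
        (x.val = (q+1) - 1 ∧ y.val = m + 1)) → |pot m A B x - pot m A B y| ≤ 1 := by
    intro x y h
    rcases h with ⟨h1, h2⟩ | ⟨h1, h2⟩ | ⟨h1, h2⟩
    · have hx : x.val < m := by omega
      rw [pot, pot, if_pos hx, if_pos h2, h1]
      push_cast; rw [abs_of_nonpos (by linarith)]; linarith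
    · simp only [Nat.add_sub_cancel] at h1
      have hx : x.val < m := by omega
      rw [pot, pot, if_pos hx, if_neg (by omega), if_pos h2, h1]
      rwa [abs_sub_comm]
    · simp only [Nat.add_sub_cancel] at h1
      have hx : x.val < m := by omega
      rw [pot, pot, if_pos hx, if_neg (by omega), if_neg (by omega), h1]
      rwa [abs_sub_comm]
  intro x y hadj
  rw [caterpillar2, fromRel_adj] at hadj
  rcases hadj.2 with h | h
  · exact key x y h
  · rw [abs_sub_comm]; exact key y x h

/-- lower bound on distances via potential -/
lemma dist_ge (A B : ℤ) (hA : |A - p| ≤ 1) (hB : |B - q| ≤ 1) (u v : Fin (m + 2)) :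
    |pot m A B u - pot m A B v| ≤ (G).dist u v :=
  abs_sub_le_dist _ (pot_lipschitz hpq hqm A B hA hB) (reach_all hpq hqm u v)

end Pot

section DistEq
variable {m p q : ℕ} (hpq : p < q) (hqm : q + 1 < m)
local notation "G" => caterpillar2 m (p+1) (q+1)

lemma pot_path (A B : ℤ) (x : ℕ) (hx2 : x < m + 2) (hx : x < m) :
    pot m A B ⟨x, hx2⟩ = x := by simp [pot, hx]

lemma pot_m (A B : ℤ) (h : m < m + 2) : pot m A B ⟨m, h⟩ = A := by simp [pot]

lemma pot_m1 (A B : ℤ) (h : m + 1 < m + 2) : pot m A B ⟨m + 1, h⟩ = B := by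
  simp [pot]

lemma D_val {x y : ℕ} (hx : x < m) (hy : y < m) : D m p q x y = (x - y) + (y - x) := by
  unfold D pc; split_ifs <;> omega

include hpq in
lemma D_L1 {x : ℕ} (hx : x < m) : D m p q x m = (x - p) + (p - x) + 1 := by
  unfold D pc; split_ifs <;> omega

include hpq hqm in
lemma D_L2 {x : ℕ} (hx : x < m) : D m p q x (m + 1) = (x - q) + (q - x) + 1 := by
  unfold D pc; split_ifs <;> omega

include hpq hqm in
lemma D_L1L2 : D m p q m (m + 1) = (q - p) + 2 := by
  unfold D pc; split_ifs <;> omega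

include hpq hqm

lemma dist_eq_aux (x y : ℕ) (hx : x < m + 2) (hy : y < m + 2) (hxy : x ≤ y) :
    (G).dist ⟨x, hx⟩ ⟨y, hy⟩ = D m p q x y := by
  rcases Nat.eq_or_lt_of_le hxy with rfl | hlt
  · simp [D]
  rcases Nat.lt_or_ge y m with hym | hym
  · -- both path vertices
    have hxm : x < m := by omega
    have hub := (path_dd hpq hqm x y hxm hym hx hy).2
    have hlb := dist_ge hpq hqm (p : ℤ) (q : ℤ) (by simp) (by simp) ⟨x, hx⟩ ⟨y, hy⟩
    rw [pot_path, pot_path, abs_of_nonpos (by push_cast; omega)] at hlb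
    · rw [D_val hxm hym]; omega
    all_goals omega
  rcases Nat.eq_or_lt_of_le hym with hym' | hym'
  · -- y = m
    subst hym'
    have hxm : x < m := by omega
    have hub := (distL1 hpq hqm x hxm hx hy).2
    rw [D_L1 hpq hxm]
    rcases Nat.le_total x p with hxp | hxp
    · have hlb := dist_ge hpq hqm ((p : ℤ) + 1) (q : ℤ)
        (by simp) (by simp) ⟨x, hx⟩ ⟨m, hy⟩
      rw [pot_path _ _ _ _ hxm, pot_m, abs_of_nonpos (by push_cast; omega)] at hlb
      omega
    · have hlb := dist_ge hpq hqm ((p : ℤ) - 1) (q : ℤ)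
        (by simp) (by simp) ⟨x, hx⟩ ⟨m, hy⟩
      rw [pot_path _ _ _ _ hxm, pot_m, abs_of_nonneg (by push_cast; omega)] at hlb
      omega
  · -- y = m + 1
    have hym1 : y = m + 1 := by omega
    subst hym1
    rcases Nat.lt_or_ge x m with hxm | hxm
    · have hub := (distL2 hpq hqm x hxm hx hy).2
      rw [D_L2 hpq hqm hxm]
      rcases Nat.le_total x q with hxq | hxq
      · have hlb := dist_ge hpq hqm (p : ℤ) ((q : ℤ) + 1)
          (by simp) (by simp) ⟨x, hx⟩ ⟨m + 1, hy⟩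
        rw [pot_path _ _ _ _ hxm, pot_m1, abs_of_nonpos (by push_cast; omega)] at hlb
        omega
      · have hlb := dist_ge hpq hqm (p : ℤ) ((q : ℤ) - 1)
          (by simp) (by simp) ⟨x, hx⟩ ⟨m + 1, hy⟩
        rw [pot_path _ _ _ _ hxm, pot_m1, abs_of_nonneg (by push_cast; omega)] at hlb
        omega
    · -- x = m
      have hxm' : x = m := by omega
      subst hxm'
      have hub := (distL1L2 hpq hqm hx hy).2
      rw [D_L1L2 hpq hqm]
      have hlb := dist_ge hpq hqm ((p : ℤ) - 1) ((q : ℤ) + 1)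
        (by simp) (by simp) ⟨x, hx⟩ ⟨x + 1, hy⟩
      rw [pot_m, pot_m1, abs_of_nonpos (by push_cast; omega)] at hlb
      omega

lemma dist_eq (u v : Fin (m + 2)) : (G).dist u v = D m p q u.val v.val := by
  obtain ⟨x, hx⟩ := u
  obtain ⟨y, hy⟩ := v
  rcases Nat.le_total x y with h | h
  · exact dist_eq_aux hpq hqm x y hx hy h
  · rw [dist_comm, D_symm]
    exact dist_eq_aux hpq hqm y x hy hx h

end DistEq

section Trans
variable {m p q : ℕ} (hpq : p < q) (hqm : q + 1 < m)
local notation "G" => caterpillar2 m (p+1) (q+1)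

lemma natabs_cast (x k : ℕ) : (((x - k) + (k - x) : ℕ) : ℤ) = |(x : ℤ) - k| := by
  rcases Nat.le_total x k with h | h
  · rw [abs_of_nonpos (by push_cast; omega)]; omega
  · rw [abs_of_nonneg (by push_cast; omega)]; omega

include hpq hqm

lemma trans_sum (v : Fin (m + 2)) :
    transmission (G) v
      = ∑ k ∈ Finset.range m, D m p q v.val k + D m p q v.val m + D m p q v.val (m + 1) := by
  rw [transmission]
  rw [Finset.sum_congr rfl (fun u _ => dist_eq hpq hqm v u)]
  rw [Fin.sum_univ_eq_sum_range (fun k => D m p q v.val k) (m + 2)]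
  rw [Finset.sum_range_succ, Finset.sum_range_succ]

lemma trans_path (x : ℕ) (hx : x < m) (hx2 : x < m + 2) :
    2 * (transmission (G) ⟨x, hx2⟩ : ℤ)
      = x * (x + 1) + ((m : ℤ) - 1 - x) * ((m : ℤ) - x)
        + 2 * |(x : ℤ) - p| + 2 * |(x : ℤ) - q| + 4 := by
  rw [trans_sum hpq hqm]
  have h1 : ∀ k ∈ Finset.range m, D m p q x k = (x - k) + (k - x) := by
    intro k hk
    exact D_val hx (Finset.mem_range.mp hk)
  rw [Finset.sum_congr rfl h1, D_L1 hpq hx, D_L2 hpq hqm hx]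
  have h2 : ((∑ k ∈ Finset.range m, ((x - k) + (k - x)) : ℕ) : ℤ)
      = ∑ k ∈ Finset.range m, |(x : ℤ) - k| := by
    push_cast [Nat.cast_sum]
    exact Finset.sum_congr rfl (fun k _ => natabs_cast x k)
  have h3 := sum_abs_Z x m hx
  have h4 := natabs_cast x p
  have h5 := natabs_cast x q
  push_cast
  push_cast at h2 h4 h5
  linarith

lemma trans_L1 (h : m < m + 2) :
    2 * (transmission (G) ⟨m, h⟩ : ℤ)
      = p * (p + 1) + ((m : ℤ) - 1 - p) * ((m : ℤ) - p)
        + 2 * m + 2 * ((q : ℤ) - p) + 4 := by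
  rw [trans_sum hpq hqm]
  have h1 : ∀ k ∈ Finset.range m, D m p q m k = ((k - p) + (p - k)) + 1 := by
    intro k hk
    rw [D_symm, D_L1 hpq (Finset.mem_range.mp hk)]
  rw [Finset.sum_congr rfl h1, Finset.sum_add_distrib, Finset.sum_const, Finset.card_range]
  have hdm : D m p q m m = 0 := by simp [D]
  rw [hdm, D_L1L2 hpq hqm]
  have h2 : ((∑ k ∈ Finset.range m, ((k - p) + (p - k)) : ℕ) : ℤ)
      = ∑ k ∈ Finset.range m, |(p : ℤ) - k| := by
    push_cast [Nat.cast_sum]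
    refine Finset.sum_congr rfl (fun k _ => ?_)
    rw [abs_sub_comm]
    exact natabs_cast k p
  have h3 := sum_abs_Z p m (by omega)
  have h6 : ((q - p : ℕ) : ℤ) = (q : ℤ) - p := by omega
  simp only [smul_eq_mul, mul_one]
  push_cast
  push_cast at h2 h6
  linarith

lemma trans_L2 (h : m + 1 < m + 2) :
    2 * (transmission (G) ⟨m + 1, h⟩ : ℤ)
      = q * (q + 1) + ((m : ℤ) - 1 - q) * ((m : ℤ) - q)
        + 2 * m + 2 * ((q : ℤ) - p) + 4 := by
  rw [trans_sum hpq hqm]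
  have h1 : ∀ k ∈ Finset.range m, D m p q (m + 1) k = ((k - q) + (q - k)) + 1 := by
    intro k hk
    rw [D_symm, D_L2 hpq hqm (Finset.mem_range.mp hk)]
  rw [Finset.sum_congr rfl h1, Finset.sum_add_distrib, Finset.sum_const, Finset.card_range]
  have hdm : D m p q (m + 1) m = (q - p) + 2 := by rw [D_symm]; exact D_L1L2 hpq hqm
  have hdm1 : D m p q (m + 1) (m + 1) = 0 := by simp [D]
  rw [hdm, hdm1]
  have h2 : ((∑ k ∈ Finset.range m, ((k - q) + (q - k)) : ℕ) : ℤ)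
      = ∑ k ∈ Finset.range m, |(q : ℤ) - k| := by
    push_cast [Nat.cast_sum]
    refine Finset.sum_congr rfl (fun k _ => ?_)
    rw [abs_sub_comm]
    exact natabs_cast k q
  have h3 := sum_abs_Z q m (by omega)
  have h6 : ((q - p : ℕ) : ℤ) = (q : ℤ) - p := by omega
  simp only [smul_eq_mul, mul_one]
  push_cast
  push_cast at h2 h6
  linarith

end Trans


section Arith
-- region forms: R1: d ≤ 1, value d^2 - 2*d + 2*s
--               R2: 1 ≤ d ≤ 2s-1, value d^2 + 2*s - 2
--               R3: 2s-1 ≤ d, value d^2 + 2*d - 2*s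

lemma case11 (s d e : ℤ) (hd : d ≤ 1) (he : e ≤ 1)
    (h : d^2 - 2*d + 2*s = e^2 - 2*e + 2*s) : d = e := by
  have h0 : (d - e) * (d + e - 2) = 0 := by linear_combination h
  rcases mul_eq_zero.mp h0 with h1 | h1
  · linarith
  · linarith

lemma case22 (s d e : ℤ) (hd : 1 ≤ d) (he : 1 ≤ e)
    (h : d^2 + 2*s - 2 = e^2 + 2*s - 2) : d = e := by
  have h0 : (d - e) * (d + e) = 0 := by linear_combination h
  rcases mul_eq_zero.mp h0 with h1 | h1
  · linarith
  · linarith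

lemma case33 (s d e : ℤ) (hs : 2 ≤ s) (hd : 2*s - 1 ≤ d) (he : 2*s - 1 ≤ e)
    (h : d^2 + 2*d - 2*s = e^2 + 2*e - 2*s) : d = e := by
  have h0 : (d - e) * (d + e + 2) = 0 := by linear_combination h
  rcases mul_eq_zero.mp h0 with h1 | h1
  · linarith
  · linarith

lemma case12 (s d e : ℤ) (hs : 2 ≤ s) (hd : d ≤ 1) (he : 1 ≤ e)
    (h : d^2 - 2*d + 2*s = e^2 + 2*s - 2) : d = e := by
  have h0 : (e - (1 - d)) * (e + (1 - d)) = 1 := by linear_combination -h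
  rcases Int.mul_eq_one_iff_eq_one_or_neg_one.mp h0 with ⟨h1, h2⟩ | ⟨h1, h2⟩
  · linarith
  · linarith

lemma case13 (s d e : ℤ) (hs : 2 ≤ s) (hd : d ≤ 1) (he : 2*s - 1 ≤ e)
    (h : d^2 - 2*d + 2*s = e^2 + 2*e - 2*s) : False := by
  set x := e + 1 with hxdef
  set y := 1 - d with hydef
  have hx : 2*s ≤ x := by omega
  have hy : 0 ≤ y := by omega
  have hxy : x*x - y*y = 4*s := by linear_combination -h
  have hyx : y < x := by
    rcases le_or_gt x y with hc | hc
    · nlinarith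
    · exact hc
  rcases eq_or_lt_of_le hy with hy0 | hy1
  · nlinarith
  · rcases le_or_gt (x - y) 1 with hc | hc
    · have hx1 : x = y + 1 := by omega
      have : 2*y + 1 = 4*s := by nlinarith
      omega
    · nlinarith [mul_le_mul hc (le_refl (x + y)) (by linarith) (by linarith)]

lemma case23 (s d e : ℤ) (hs : 2 ≤ s) (hd1 : 1 ≤ d) (hd2 : d ≤ 2*s - 1)
    (he : 2*s - 1 ≤ e) (h : d^2 + 2*s - 2 = e^2 + 2*e - 2*s) : d = e := by
  rcases le_or_gt (e + 1) (2*s) with hc | hc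
  · have he1 : e = 2*s - 1 := by omega
    subst he1
    have h0 : (d - (2*s - 1)) * (d + (2*s - 1)) = 0 := by linear_combination h
    rcases mul_eq_zero.mp h0 with h1 | h1
    · linarith
    · linarith
  · nlinarith

end Arith

section Arith2

lemma sq_mod4 (y r : ℤ) (h : y * y = r) : r % 4 = 0 ∨ r % 4 = 1 := by
  rcases Int.even_or_odd y with ⟨k, hk⟩ | ⟨k, hk⟩
  · rw [hk] at h
    have h2 : 4 * (k * k) = r := by linear_combination h
    generalize k * k = K at h2
    omega
  · rw [hk] at h
    have h2 : 4 * (k * k) + 4 * k + 1 = r := by linear_combination h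
    generalize k * k = K at h2
    omega

-- value of h at leaf L1 is never attained by a path vertex
lemma notB1 (s d : ℤ) (hs : 2 ≤ s) (hd : d ≤ 1) :
    d^2 - 2*d + 2*s ≠ 4*s^2 + 2*s - 2 := by
  intro h
  have hy : (1 - d) * (1 - d) = 4*s^2 - 1 := by linear_combination h
  have h0 : 0 ≤ 1 - d := by omega
  rcases le_or_gt (1 - d) (2*s - 1) with hc | hc
  · nlinarith
  · nlinarith

lemma notB2 (s d : ℤ) (hs : 2 ≤ s) (hd1 : 1 ≤ d) (hd2 : d ≤ 2*s - 1) :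
    d^2 + 2*s - 2 ≠ 4*s^2 + 2*s - 2 := by
  intro h
  nlinarith

lemma notB3 (s d : ℤ) (hs : 2 ≤ s) (hd : 2*s - 1 ≤ d) :
    d^2 + 2*d - 2*s ≠ 4*s^2 + 2*s - 2 := by
  intro h
  have hy : (d + 1) * (d + 1) = 4*s^2 + 4*s - 1 := by linear_combination h
  rcases le_or_gt (d + 1) (2*s) with hc | hc
  · nlinarith
  · nlinarith

lemma notC1 (s d : ℤ) (hs : 2 ≤ s) (hd : d ≤ 1) :
    d^2 - 2*d + 2*s ≠ 8*s^2 - 2*s - 2 := by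
  intro h
  have hy : (1 - d) * (1 - d) = 8*s^2 - 4*s - 1 := by linear_combination h
  have := sq_mod4 _ _ hy
  have hss : 8*s^2 = 8 * (s*s) := by ring
  rw [hss] at this
  generalize s * s = S at this
  omega

lemma notC2 (s d : ℤ) (hs : 2 ≤ s) (hd1 : 1 ≤ d) (hd2 : d ≤ 2*s - 1) :
    d^2 + 2*s - 2 ≠ 8*s^2 - 2*s - 2 := by
  intro h
  nlinarith

lemma notC3 (s d : ℤ) (hs : 2 ≤ s) (hd : 2*s - 1 ≤ d) :
    d^2 + 2*d - 2*s ≠ 8*s^2 - 2*s - 2 := by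
  intro h
  have hy : (d + 1) * (d + 1) = 8*s^2 - 1 := by linear_combination h
  have := sq_mod4 _ _ hy
  have hss : 8*s^2 = 8 * (s*s) := by ring
  rw [hss] at this
  generalize s * s = S at this
  omega

end Arith2

section Assembled

/-- the piecewise value as abs expression -/
lemma habs_region (s d : ℤ) (hs : 2 ≤ s) :
    (d ≤ 1 ∧ d^2 + |d - 1| + |d - (2*s - 1)| = d^2 - 2*d + 2*s) ∨
    (1 ≤ d ∧ d ≤ 2*s - 1 ∧ d^2 + |d - 1| + |d - (2*s - 1)| = d^2 + 2*s - 2) ∨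
    (2*s - 1 ≤ d ∧ d^2 + |d - 1| + |d - (2*s - 1)| = d^2 + 2*d - 2*s) := by
  rcases le_total d 1 with h1 | h1
  · left
    refine ⟨h1, ?_⟩
    rw [abs_of_nonpos (by linarith), abs_of_nonpos (by linarith)]
    ring
  · rcases le_total d (2*s - 1) with h2 | h2
    · right; left
      refine ⟨h1, h2, ?_⟩
      rw [abs_of_nonneg (by linarith), abs_of_nonpos (by linarith)]
      ring
    · right; right
      refine ⟨h2, ?_⟩
      rw [abs_of_nonneg (by linarith), abs_of_nonneg (by linarith)]
      ring

lemma path_inj (s d e : ℤ) (hs : 2 ≤ s)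
    (h : d^2 + |d - 1| + |d - (2*s - 1)| = e^2 + |e - 1| + |e - (2*s - 1)|) : d = e := by
  rcases habs_region s d hs with ⟨hd, hD⟩ | ⟨hd1, hd2, hD⟩ | ⟨hd, hD⟩ <;>
    rcases habs_region s e hs with ⟨he, hE⟩ | ⟨he1, he2, hE⟩ | ⟨he, hE⟩ <;>
      rw [hD, hE] at h
  · exact case11 s d e hd he h
  · exact case12 s d e hs hd he1 h
  · exact (case13 s d e hs hd he h).elim
  · exact (case12 s e d hs he hd1 h.symm).symm
  · exact case22 s d e hd1 he1 h
  · exact case23 s d e hs hd1 hd2 he h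
  · exact ((case13 s e d hs he hd h.symm)).elim
  · exact (case23 s e d hs he1 he2 hd h.symm).symm
  · exact case33 s d e hs hd he h

lemma path_ne_L1 (s d : ℤ) (hs : 2 ≤ s) :
    d^2 + |d - 1| + |d - (2*s - 1)| ≠ 4*s^2 + 2*s - 2 := by
  rcases habs_region s d hs with ⟨hd, hD⟩ | ⟨hd1, hd2, hD⟩ | ⟨hd, hD⟩ <;> rw [hD]
  · exact notB1 s d hs hd
  · exact notB2 s d hs hd1 hd2
  · exact notB3 s d hs hd

lemma path_ne_L2 (s d : ℤ) (hs : 2 ≤ s) :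
    d^2 + |d - 1| + |d - (2*s - 1)| ≠ 8*s^2 - 2*s - 2 := by
  rcases habs_region s d hs with ⟨hd, hD⟩ | ⟨hd1, hd2, hD⟩ | ⟨hd, hD⟩ <;> rw [hD]
  · exact notC1 s d hs hd
  · exact notC2 s d hs hd1 hd2
  · exact notC3 s d hs hd

end Assembled

end CatTIAux

set_option maxHeartbeats 2000000 in
/-- for any odd `n ≥ 17` with `n - 1` a perfect square, the ordinary
caterpillar `C_{n-2}((n+1)/2, (n-3)/2 + √(n-1))` is transmission irregular. -/
theorem caterpillar_TI_of_odd_sq_sub_one (n : ℕ) (hodd : Odd n) (hn : 17 ≤ n)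
    (hsq : IsPerfectSquare (n - 1)) :
    TransIrregular
      (caterpillar2 (n - 2) ((n + 1) / 2) ((n - 3) / 2 + Nat.sqrt (n - 1))) := by
  classical
  obtain ⟨t, ht⟩ := hsq
  have hteven : Even t := by
    rcases Nat.even_or_odd t with h | h
    · exact h
    · exfalso
      have h2 : Odd (t * t) := h.mul h
      rw [← ht] at h2
      obtain ⟨a, ha⟩ := h2
      obtain ⟨b, hb⟩ := hodd
      omega
  obtain ⟨r, hr⟩ := hteven
  have hs2 : 2 ≤ r := by
    rcases le_or_gt 2 r with h | h
    · exact h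
    · exfalso
      have h1 : t ≤ 2 := by omega
      have h2 : t * t ≤ 2 * 2 := Nat.mul_le_mul h1 h1
      omega
  obtain ⟨B, hB⟩ : ∃ B, B = r * r := ⟨_, rfl⟩
  have h4 : t * t = 4 * B := by rw [hB, hr]; ring
  have h5 : n - 1 = 4 * B := by rw [ht, h4]
  have hnA : n = 4 * B + 1 := by omega
  have hrB : r < B := by rw [hB]; nlinarith
  have hsqrt : Nat.sqrt (n - 1) = t := by rw [ht, show t * t = t ^ 2 by ring, Nat.sqrt_eq']
  have e1 : (n + 1) / 2 = 2 * B + 1 := by omega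
  have e2 : (n - 3) / 2 + Nat.sqrt (n - 1) = 2 * B + 2 * r - 2 + 1 := by
    rw [hsqrt, hr]; omega
  rw [e1, e2]
  have hpq : 2 * B < 2 * B + 2 * r - 2 := by omega
  have hqm : (2 * B + 2 * r - 2) + 1 < n - 2 := by omega
  -- integer casts
  have hs2Z : (2 : ℤ) ≤ (r : ℤ) := by exact_mod_cast hs2
  have hpZ : ((2 * B : ℕ) : ℤ) = 2 * (r : ℤ) * (r : ℤ) := by
    rw [hB]; push_cast; ring
  have hqZ : ((2 * B + 2 * r - 2 : ℕ) : ℤ) = 2 * (r : ℤ) * (r : ℤ) + 2 * (r : ℤ) - 2 := by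
    rw [hB]
    rw [Nat.cast_sub (by nlinarith)]
    push_cast; ring
  have hmZ : ((n - 2 : ℕ) : ℤ) = 4 * (r : ℤ) * (r : ℤ) - 1 := by
    have h1 : (n - 2 : ℕ) = 4 * B - 1 := by omega
    rw [h1, hB, Nat.cast_sub (by nlinarith)]
    push_cast; ring
  constructor
  · simp only [Fintype.card_fin]; omega
  intro v w hvw
  obtain ⟨x, hx⟩ := v
  obtain ⟨y, hy⟩ := w
  simp only [Fin.mk.injEq]
  have hvalL1 : ((2 * B : ℕ) : ℤ) * (((2 * B : ℕ) : ℤ) + 1)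
      + (((n - 2 : ℕ) : ℤ) - 1 - ((2 * B : ℕ) : ℤ)) * (((n - 2 : ℕ) : ℤ) - ((2 * B : ℕ) : ℤ))
      + 2 * ((n - 2 : ℕ) : ℤ) + 2 * (((2 * B + 2 * r - 2 : ℕ) : ℤ) - ((2 * B : ℕ) : ℤ)) + 4
      = 8 * (r:ℤ)^4 + 4 * (r:ℤ)^2 + 4 * (r:ℤ) := by
    rw [hmZ, hpZ, hqZ]; ring
  have hvalL2 : ((2 * B + 2 * r - 2 : ℕ) : ℤ) * (((2 * B + 2 * r - 2 : ℕ) : ℤ) + 1)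
      + (((n - 2 : ℕ) : ℤ) - 1 - ((2 * B + 2 * r - 2 : ℕ) : ℤ))
        * (((n - 2 : ℕ) : ℤ) - ((2 * B + 2 * r - 2 : ℕ) : ℤ))
      + 2 * ((n - 2 : ℕ) : ℤ) + 2 * (((2 * B + 2 * r - 2 : ℕ) : ℤ) - ((2 * B : ℕ) : ℤ)) + 4
      = 8 * (r:ℤ)^4 + 12 * (r:ℤ)^2 - 4 * (r:ℤ) := by
    rw [hmZ, hpZ, hqZ]; ring
  -- path vertex d-form
  have pathE : ∀ (z : ℕ) (hz : z < n - 2) (hz2 : z < n - 2 + 2),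
      2 * (transmission (caterpillar2 (n-2) (2*B+1) (2*B+2*r-2+1)) ⟨z, hz2⟩ : ℤ)
        = 2 * ((z:ℤ) - (2*(r:ℤ)*(r:ℤ) - 1))^2
          + 2 * |(z:ℤ) - (2*(r:ℤ)*(r:ℤ) - 1) - 1|
          + 2 * |(z:ℤ) - (2*(r:ℤ)*(r:ℤ) - 1) - (2*(r:ℤ) - 1)|
          + (8*(r:ℤ)^4 - 4*(r:ℤ)^2 + 4) := by
    intro z hz hz2
    have E := CatTIAux.trans_path hpq hqm z hz hz2
    have habs1 : |(z:ℤ) - ((2 * B : ℕ) : ℤ)|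
        = |(z:ℤ) - (2*(r:ℤ)*(r:ℤ) - 1) - 1| := by
      rw [hpZ]; congr 1; ring
    have habs2 : |(z:ℤ) - ((2 * B + 2 * r - 2 : ℕ) : ℤ)|
        = |(z:ℤ) - (2*(r:ℤ)*(r:ℤ) - 1) - (2*(r:ℤ) - 1)| := by
      rw [hqZ]; congr 1; ring
    have hquad : (z:ℤ) * ((z:ℤ) + 1)
        + (((n - 2 : ℕ) : ℤ) - 1 - (z:ℤ)) * (((n - 2 : ℕ) : ℤ) - (z:ℤ))
        = 2 * ((z:ℤ) - (2*(r:ℤ)*(r:ℤ) - 1))^2 + (8*(r:ℤ)^4 - 4*(r:ℤ)^2) := by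
      rw [hmZ]; ring
    rw [E, habs1, habs2]
    linarith [hquad]
  rcases Nat.lt_or_ge x (n - 2) with hxm | hxm
  · rcases Nat.lt_or_ge y (n - 2) with hym | hym
    · -- both path vertices
      have E1 := pathE x hxm hx
      have E2 := pathE y hym hy
      rw [hvw] at E1
      have key : ((x:ℤ) - (2*(r:ℤ)*(r:ℤ) - 1))^2
          + |(x:ℤ) - (2*(r:ℤ)*(r:ℤ) - 1) - 1|
          + |(x:ℤ) - (2*(r:ℤ)*(r:ℤ) - 1) - (2*(r:ℤ) - 1)|
          = ((y:ℤ) - (2*(r:ℤ)*(r:ℤ) - 1))^2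
          + |(y:ℤ) - (2*(r:ℤ)*(r:ℤ) - 1) - 1|
          + |(y:ℤ) - (2*(r:ℤ)*(r:ℤ) - 1) - (2*(r:ℤ) - 1)| := by linarith
      have := CatTIAux.path_inj (r:ℤ) _ _ hs2Z key
      have : (x:ℤ) = (y:ℤ) := by linarith
      exact_mod_cast this
    · -- x path, y leaf: contradiction
      exfalso
      have E1 := pathE x hxm hx
      rw [hvw] at E1
      have hy2 : y = n - 2 ∨ y = n - 2 + 1 := by omega
      rcases hy2 with hy2 | hy2
      · subst hy2
        have EL := CatTIAux.trans_L1 hpq hqm hy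
        exact CatTIAux.path_ne_L1 (r:ℤ) ((x:ℤ) - (2*(r:ℤ)*(r:ℤ) - 1)) hs2Z
          (by linarith [E1, EL, hvalL1])
      · subst hy2
        have EL := CatTIAux.trans_L2 hpq hqm hy
        exact CatTIAux.path_ne_L2 (r:ℤ) ((x:ℤ) - (2*(r:ℤ)*(r:ℤ) - 1)) hs2Z
          (by linarith [E1, EL, hvalL2])
  · rcases Nat.lt_or_ge y (n - 2) with hym | hym
    · -- x leaf, y path: contradiction
      exfalso
      have E2 := pathE y hym hy
      rw [← hvw] at E2
      have hx2 : x = n - 2 ∨ x = n - 2 + 1 := by omega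
      rcases hx2 with hx2 | hx2
      · subst hx2
        have EL := CatTIAux.trans_L1 hpq hqm hx
        exact CatTIAux.path_ne_L1 (r:ℤ) ((y:ℤ) - (2*(r:ℤ)*(r:ℤ) - 1)) hs2Z
          (by linarith [E2, EL, hvalL1])
      · subst hx2
        have EL := CatTIAux.trans_L2 hpq hqm hx
        exact CatTIAux.path_ne_L2 (r:ℤ) ((y:ℤ) - (2*(r:ℤ)*(r:ℤ) - 1)) hs2Z
          (by linarith [E2, EL, hvalL2])
    · -- both leaves
      have hx2 : x = n - 2 ∨ x = n - 2 + 1 := by omega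
      have hy2 : y = n - 2 ∨ y = n - 2 + 1 := by omega
      rcases hx2 with hx2 | hx2 <;> rcases hy2 with hy2 | hy2 <;> subst hx2 <;> subst hy2
      · rfl
      · exfalso
        have ELx := CatTIAux.trans_L1 hpq hqm hx
        have ELy := CatTIAux.trans_L2 hpq hqm hy
        rw [hvw] at ELx
        have hr2 : 2 * (r:ℤ) ≤ (r:ℤ) * (r:ℤ) :=
          mul_le_mul_of_nonneg_right hs2Z (by linarith)
        nlinarith [ELx, ELy, hvalL1, hvalL2, hr2]
      · exfalso
        have ELx := CatTIAux.trans_L2 hpq hqm hx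
        have ELy := CatTIAux.trans_L1 hpq hqm hy
        rw [hvw] at ELx
        have hr2 : 2 * (r:ℤ) ≤ (r:ℤ) * (r:ℤ) :=
          mul_le_mul_of_nonneg_right hs2Z (by linarith)
        nlinarith [ELx, ELy, hvalL1, hvalL2, hr2]
      · rfl
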